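/- Let T : X → X be a local homeomorphism of a locally compact Hausdorff space. A unit x of the Deaconu–Renault groupoid G_T is not effective if and only if the forward orbit {T^k x : k ∈ ℕ} meets 𝒫 = ⋃_{p≥1} {z : T^p fixes a neighbourhood of z pointwise}. -/

import Mathlib

open Set Function

/-- The arrow space of the Deaconu–Renault groupoid of `T : X → X`. -/
def DRGroupoid {X : Type*} (T : X → X) : Type _ :=
  {g : X × ℤ × X // ∃ m n : ℕ, g.2.1 = (m : ℤ) - n ∧ T^[m] g.1 = T^[n] g.2.2}

/-- The (étale) topology on the Deaconu–Renault groupoid, generated by the basic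
open sets `Z(U, m, n, V)`. -/
instance DRGroupoid.instTopologicalSpace {X : Type*} [TopologicalSpace X] (T : X → X) :
    TopologicalSpace (DRGroupoid T) :=
  TopologicalSpace.generateFrom
    {S | ∃ (U V : Set X) (m n : ℕ), IsOpen U ∧ IsOpen V ∧
      S = {g : DRGroupoid T | g.val.1 ∈ U ∧ g.val.2.2 ∈ V ∧
        g.val.2.1 = (m : ℤ) - n ∧ T^[m] g.val.1 = T^[n] g.val.2.2}}

/-- The isotropy bundle of the Deaconu–Renault groupoid. -/
def DRGroupoid.iso {X : Type*} (T : X → X) : Set (DRGroupoid T) :=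
  {g | g.val.1 = g.val.2.2}

/-- The unit of the Deaconu–Renault groupoid corresponding to `x ∈ X`. -/
def DRGroupoid.unit {X : Type*} (T : X → X) (x : X) : DRGroupoid T :=
  ⟨(x, 0, x), 0, 0, by simp, rfl⟩

/-- The Deaconu–Renault groupoid is effective at the unit `x` if the interior of
the isotropy bundle meets the source fibre over `x` only in the unit. -/
def DRGroupoid.EffectiveAt {X : Type*} [TopologicalSpace X] (T : X → X) (x : X) : Prop :=
  interior (DRGroupoid.iso T) ∩ {g : DRGroupoid T | g.val.2.2 = x}
    = {DRGroupoid.unit T x}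

/-- Iterates of a local homeomorphism are local homeomorphisms. -/
theorem IsLocalHomeomorph.iterate' {X : Type*} [TopologicalSpace X] {T : X → X}
    (hT : IsLocalHomeomorph T) (n : ℕ) : IsLocalHomeomorph (T^[n]) := by
  induction n with
  | zero => simpa using (Homeomorph.refl X).isLocalHomeomorph
  | succ n ih => rw [Function.iterate_succ']; exact hT.comp ih

/-- a unit `x` of the Deaconu–Renault groupoid of a local
homeomorphism `T` fails to be effective iff its forward orbit meets
`𝒫 = ⋃_{p ≥ 1} {z : T^p fixes a neighbourhood of z pointwise}`. -/
theorem DRGroupoid_not_effectiveAt_iff_orbit_meets_P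
    {X : Type*} [TopologicalSpace X] [T2Space X] [LocallyCompactSpace X]
    (T : X → X) (hT : IsLocalHomeomorph T) (x : X) :
    ¬ DRGroupoid.EffectiveAt T x ↔
      ∃ k : ℕ, ∃ p : ℕ, 0 < p ∧
        ∃ U : Set X, IsOpen U ∧ T^[k] x ∈ U ∧ ∀ u ∈ U, T^[p] u = u := by
  set gens : Set (Set (DRGroupoid T)) :=
    {S | ∃ (U V : Set X) (m n : ℕ), IsOpen U ∧ IsOpen V ∧
      S = {g : DRGroupoid T | g.val.1 ∈ U ∧ g.val.2.2 ∈ V ∧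
        g.val.2.1 = (m : ℤ) - n ∧ T^[m] g.val.1 = T^[n] g.val.2.2}} with hgens
  have hopen_gen : ∀ S ∈ gens, IsOpen S := fun S hS =>
    TopologicalSpace.isOpen_generateFrom_of_mem hS
  constructor
  · -- forward direction
    intro hne
    classical
    -- the unit is always in the interior of the isotropy
    have hunit_int : DRGroupoid.unit T x ∈ interior (DRGroupoid.iso T) := by
      rw [mem_interior]
      refine ⟨{g : DRGroupoid T | g.val.1 ∈ (univ : Set X) ∧ g.val.2.2 ∈ (univ : Set X) ∧
          g.val.2.1 = ((0 : ℕ) : ℤ) - (0 : ℕ) ∧ T^[0] g.val.1 = T^[0] g.val.2.2}, ?_, ?_, ?_⟩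
      · intro h hh
        simpa [DRGroupoid.iso] using hh.2.2.2
      · exact hopen_gen _ ⟨univ, univ, 0, 0, isOpen_univ, isOpen_univ, rfl⟩
      · exact ⟨trivial, trivial, by simp [DRGroupoid.unit], rfl⟩
    -- so failure of effectiveness gives a nontrivial element of the interior of iso over x
    obtain ⟨g, hgA, hgne⟩ :
        ∃ g, (g ∈ interior (DRGroupoid.iso T) ∧ g.val.2.2 = x) ∧ g ≠ DRGroupoid.unit T x := by
      by_contra hcon
      push_neg at hcon
      apply hne
      apply Subset.antisymm
      · intro g hg
        exact hcon g ⟨hg.1, hg.2⟩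
      · intro g hg
        rw [mem_singleton_iff] at hg
        subst hg
        exact ⟨hunit_int, rfl⟩
    obtain ⟨hgint, hgfib⟩ := hgA
    have hgiso0 : g ∈ DRGroupoid.iso T := interior_subset hgint
    have hgiso : g.val.1 = g.val.2.2 := hgiso0
    obtain ⟨⟨a, l, b⟩, m₀, n₀, hl₀, hT₀⟩ := g
    simp only at hgfib hgiso hl₀ hT₀ hgne hgint
    obtain rfl : x = b := hgfib.symm
    obtain rfl : x = a := hgiso.symm
    -- l ≠ 0
    have hl0 : l ≠ 0 := by
      intro h
      exact hgne (Subtype.ext (by simp [h, DRGroupoid.unit]))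
    -- the minimal pair (m⋆, n⋆)
    have hPex : ∃ n : ℕ, ∃ m : ℕ, ((m : ℤ) - n = l ∧ T^[m] x = T^[n] x) :=
      ⟨n₀, m₀, hl₀.symm, hT₀⟩
    set nstar := Nat.find hPex with hnstar
    obtain ⟨mstar, hml, hmT⟩ := Nat.find_spec hPex
    -- local inverse of T^[nstar] at x
    obtain ⟨e, hxe, he⟩ := (hT.iterate' nstar) x
    have hmx : T^[mstar] x ∈ e.target := by
      rw [hmT, he]; exact e.map_source hxe
    have hTv : ∀ u : X, T^[mstar] u ∈ e.target →
        T^[nstar] (e.symm (T^[mstar] u)) = T^[mstar] u := by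
      intro u hu; rw [he]; exact e.right_inv hu
    have hvx : e.symm (T^[mstar] x) = x := by
      rw [hmT, he]; exact e.left_inv hxe
    -- the section ψ
    set ψ : X → DRGroupoid T := fun u =>
      if h : T^[mstar] u ∈ e.target then
        ⟨(u, l, e.symm (T^[mstar] u)), mstar, nstar, hml.symm, (hTv u h).symm⟩
      else DRGroupoid.unit T u with hψ
    have hψx : ψ x = ⟨(x, l, x), m₀, n₀, hl₀, hT₀⟩ := by
      apply Subtype.ext
      rw [hψ]
      simp only [dif_pos hmx, hvx]; exact congrArg Subtype.val (dif_pos hmx)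
    -- basic neighbourhood inside the interior of iso
    have hbasis := TopologicalSpace.isTopologicalBasis_of_subbasis
      (t := DRGroupoid.instTopologicalSpace T) (s := gens) rfl
    obtain ⟨B, ⟨F, ⟨hFfin, hFsub⟩, rfl⟩, hgB, hBsub⟩ :=
      hbasis.exists_subset_of_mem_open hgint isOpen_interior
    -- ψ ⁻¹' (⋂₀ F) is a neighbourhood of x
    have hpre : ∀ S ∈ F, ψ ⁻¹' S ∈ nhds x := by
      intro S hSF
      obtain ⟨U, V, m, n, hU, hV, rfl⟩ := hFsub hSF
      have hgS := mem_sInter.mp hgB _ hSF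
      obtain ⟨hxU, hxV, hlmn, hTmn⟩ := hgS
      -- minimality: nstar ≤ n, hence mstar ≤ m
      have hn : nstar ≤ n := Nat.find_min' hPex ⟨m, hlmn.symm, hTmn⟩
      have hm : m = (n - nstar) + mstar := by
        have h1 : (m : ℤ) - n = (mstar : ℤ) - nstar := by rw [hlmn.symm, hml]
        omega
      set d := n - nstar with hd
      have hnd : n = d + nstar := by omega
      -- the open neighbourhood
      have hWopen : IsOpen (U ∩ T^[mstar] ⁻¹' (e.target ∩ e.symm ⁻¹' V)) :=
        hU.inter (((hT.iterate' mstar).continuous).isOpen_preimage _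
          (e.symm.isOpen_inter_preimage hV))
      have hWx : x ∈ U ∩ T^[mstar] ⁻¹' (e.target ∩ e.symm ⁻¹' V) :=
        ⟨hxU, hmx, by rw [mem_preimage, hvx]; exact hxV⟩
      refine Filter.mem_of_superset (hWopen.mem_nhds hWx) ?_
      rintro u ⟨huU, hue, huV⟩
      have hψu : ψ u = ⟨(u, l, e.symm (T^[mstar] u)), mstar, nstar, hml.symm,
          (hTv u hue).symm⟩ := by rw [hψ]; simp only [dif_pos hue]; exact dif_pos hue
      rw [mem_preimage, hψu]
      refine ⟨huU, huV, hlmn, ?_⟩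
      show T^[m] u = T^[n] (e.symm (T^[mstar] u))
      rw [hm, hnd, Function.iterate_add_apply, Function.iterate_add_apply,
        hTv u hue]
    have hmemF : ψ ⁻¹' (⋂₀ F) ∈ nhds x := by
      rw [Set.preimage_sInter]
      exact (Filter.biInter_mem hFfin).mpr hpre
    have hΩmem : (T^[mstar] ⁻¹' e.target) ∩ ψ ⁻¹' (⋂₀ F) ∈ nhds x := by
      refine Filter.inter_mem ?_ hmemF
      exact (((hT.iterate' mstar).continuous).isOpen_preimage _ e.open_target).mem_nhds hmx
    obtain ⟨Ω₀, hΩ₀sub, hΩ₀open, hxΩ₀⟩ := mem_nhds_iff.mp hΩmem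
    -- on Ω₀ we get T^[mstar] = T^[nstar]
    have hkey : ∀ u ∈ Ω₀, T^[mstar] u = T^[nstar] u := by
      intro u hu
      obtain ⟨hue, huF⟩ := hΩ₀sub hu
      have hue' : T^[mstar] u ∈ e.target := hue
      have hψu : ψ u = ⟨(u, l, e.symm (T^[mstar] u)), mstar, nstar, hml.symm,
          (hTv u hue').symm⟩ := by rw [hψ]; simp only [dif_pos hue']; exact dif_pos hue'
      have : ψ u ∈ DRGroupoid.iso T := interior_subset (hBsub huF)
      rw [hψu] at this
      have huv : u = e.symm (T^[mstar] u) := this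
      calc T^[mstar] u = T^[nstar] (e.symm (T^[mstar] u)) := (hTv u hue').symm
        _ = T^[nstar] u := by rw [← huv]
    -- conclude
    have hmn : mstar ≠ nstar := by
      intro h; apply hl0; omega
    refine ⟨min mstar nstar, max mstar nstar - min mstar nstar, by omega,
      T^[min mstar nstar] '' Ω₀, ((hT.iterate' _).isOpenMap) _ hΩ₀open,
      mem_image_of_mem _ hxΩ₀, ?_⟩
    rintro y ⟨u, hu, rfl⟩
    have hmaxmin : T^[max mstar nstar] u = T^[min mstar nstar] u := by
      rcases le_total mstar nstar with h | h
      · rw [max_eq_right h, min_eq_left h]; exact (hkey u hu).symm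
      · rw [max_eq_left h, min_eq_right h]; exact hkey u hu
    rw [← Function.iterate_add_apply, Nat.sub_add_cancel (min_le_max)]
    exact hmaxmin
  · -- reverse direction
    rintro ⟨k, p, hp, U, hU, hxU, hfix⟩ hEff
    obtain ⟨e, hxe, he⟩ := (hT.iterate' k) x
    have hkp : ∀ u : X, T^[k] u ∈ U → T^[k + p] u = T^[k] u := by
      intro u hu
      rw [add_comm, Function.iterate_add_apply]
      exact hfix _ hu
    set g : DRGroupoid T := ⟨(x, (p : ℤ), x), k + p, k, by push_cast; ring,
      hkp x hxU⟩ with hg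
    have hgiso : g ∈ interior (DRGroupoid.iso T) := by
      rw [mem_interior]
      set V : Set X := e.source ∩ T^[k] ⁻¹' U with hV
      have hVopen : IsOpen V := e.open_source.inter
        (((hT.iterate' k).continuous).isOpen_preimage _ hU)
      have hxV : x ∈ V := ⟨hxe, hxU⟩
      refine ⟨{h : DRGroupoid T | h.val.1 ∈ V ∧ h.val.2.2 ∈ V ∧
          h.val.2.1 = ((k + p : ℕ) : ℤ) - (k : ℕ) ∧
          T^[k + p] h.val.1 = T^[k] h.val.2.2}, ?_, ?_, ?_⟩
      · rintro h ⟨⟨h1e, h1U⟩, ⟨h2e, _⟩, _, heq⟩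
        have : T^[k] h.val.1 = T^[k] h.val.2.2 := by
          rw [← hkp _ h1U]; exact heq
        rw [he] at this
        exact e.injOn h1e h2e this
      · exact hopen_gen _ ⟨V, V, k + p, k, hVopen, hVopen, rfl⟩
      · exact ⟨hxV, hxV, by push_cast; ring, hkp x hxU⟩
    have : g ∈ ({DRGroupoid.unit T x} : Set (DRGroupoid T)) := by
      rw [← hEff]; exact ⟨hgiso, rfl⟩
    rw [mem_singleton_iff] at this
    have := congrArg (fun z : DRGroupoid T => z.val.2.1) this
    simp [hg, DRGroupoid.unit] at this
    omega
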